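/- Let A_i ∈ ℤ^{r×t_i} and B_i ∈ ℤ^{s_i×t_i} for i = 1,…,n, and let C be the integer matrix with columns indexed by the t_1 + ⋯ + t_n variables whose first r rows are (A_1 A_2 ⋯ A_n) and whose remaining rows form the block-diagonal matrix diag(B_1,…,B_n). Suppose every entry of every A_i has absolute value at most Δ (with Δ ≥ 1) and every Graver basis element of every B_i has ℓ1-norm at most G (with G ≥ 1). Then every Graver basis element of C has ℓ1-norm at most G·(2rGΔ + 1)^r. -/

import Mathlib

open Finset

/-- Two integer vectors are sign-compatible if the product of corresponding
coordinates is always nonnegative. -/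
def SignCompat {ι : Type*} (u v : ι → ℤ) : Prop := ∀ j, 0 ≤ u j * v j

/-- `u` belongs to the Graver basis of the integer matrix `C`. -/
def InGraver {κ ι : Type*} [Fintype κ] [Fintype ι] (C : Matrix κ ι ℤ) (u : ι → ℤ) : Prop :=
  u ≠ 0 ∧ C.mulVec u = 0 ∧
    ¬ ∃ v w : ι → ℤ, v ≠ 0 ∧ w ≠ 0 ∧ C.mulVec v = 0 ∧ C.mulVec w = 0 ∧
      SignCompat v w ∧ u = v + w

lemma abs_add_of_mul_nonneg (a b : ℤ) (h : 0 ≤ a * b) : |a + b| = |a| + |b| := by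
  rcases le_or_gt 0 a with ha | ha <;> rcases le_or_gt 0 b with hb | hb
  · rw [abs_of_nonneg ha, abs_of_nonneg hb, abs_of_nonneg (by linarith)]
  · have : a = 0 := by nlinarith
    simp [this]
  · have : b = 0 := by nlinarith
    simp [this]
  · rw [abs_of_nonpos ha.le, abs_of_nonpos hb.le, abs_of_nonpos (by linarith)]; ring

lemma sign_trans (a b c : ℤ) (h1 : 0 ≤ a * b) (h2 : 0 ≤ b * c) (hb : b ≠ 0) : 0 ≤ a * c := by
  nlinarith [mul_nonneg h1 h2, sq_nonneg b, pow_pos (abs_pos.mpr hb) 2, sq_abs b]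

/-- Conformal decomposition of a kernel element into Graver basis elements. -/
lemma exists_conformal_decomp {κ ι : Type*} [Fintype κ] [Fintype ι] (D : Matrix κ ι ℤ)
    (u : ι → ℤ) (hu : u ≠ 0) (hker : D.mulVec u = 0) :
    ∃ (N : ℕ) (h : Fin N → ι → ℤ),
      (∀ k, InGraver D (h k)) ∧ (∀ j, ∑ k, h k j = u j) ∧
      (∀ k j, 0 ≤ h k j * u j) ∧ (∀ j, ∑ k, |h k j| = |u j|) := by
  generalize hn : (∑ j, (u j).natAbs) = n
  induction n using Nat.strong_induction_on generalizing u with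
  | _ n IH =>
  subst hn
  by_cases hgr : InGraver D u
  · refine ⟨1, fun _ => u, fun _ => hgr, ?_, ?_, ?_⟩
    · intro j; simp
    · intro k j; exact mul_self_nonneg _
    · intro j; simp
  · have hdec : ∃ v w : ι → ℤ, v ≠ 0 ∧ w ≠ 0 ∧ D.mulVec v = 0 ∧ D.mulVec w = 0 ∧
        SignCompat v w ∧ u = v + w := by
      by_contra hcon
      exact hgr ⟨hu, hker, hcon⟩
    obtain ⟨v, w, hv0, hw0, hvk, hwk, hsc, huvw⟩ := hdec
    have habs : ∀ j, |u j| = |v j| + |w j| := by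
      intro j
      have := abs_add_of_mul_nonneg (v j) (w j) (hsc j)
      rw [huvw]; simpa using this
    -- ℓ1 norms
    have hsum : ∑ j, (u j).natAbs = ∑ j, (v j).natAbs + ∑ j, (w j).natAbs := by
      have : (↑(∑ j, (u j).natAbs) : ℤ) = ↑(∑ j, (v j).natAbs) + ↑(∑ j, (w j).natAbs) := by
        push_cast [← Int.abs_eq_natAbs]
        rw [← Finset.sum_add_distrib]
        exact Finset.sum_congr rfl fun j _ => habs j
      exact_mod_cast this
    have hposv : 0 < ∑ j, (v j).natAbs := by
      by_contra hc
      push_neg at hc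
      interval_cases h' : (∑ j, (v j).natAbs)
      · apply hv0; funext j
        have := Finset.sum_eq_zero_iff.mp h' j (Finset.mem_univ j)
        simpa [Int.natAbs_eq_zero] using this
    have hposw : 0 < ∑ j, (w j).natAbs := by
      by_contra hc
      push_neg at hc
      interval_cases h' : (∑ j, (w j).natAbs)
      · apply hw0; funext j
        have := Finset.sum_eq_zero_iff.mp h' j (Finset.mem_univ j)
        simpa [Int.natAbs_eq_zero] using this
    obtain ⟨N1, h1, hg1, hs1, hc1, ha1⟩ := IH (∑ j, (v j).natAbs) (by omega) v hv0 hvk rfl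
    obtain ⟨N2, h2, hg2, hs2, hc2, ha2⟩ := IH (∑ j, (w j).natAbs) (by omega) w hw0 hwk rfl
    -- sign transfer facts
    have hvu : ∀ j, 0 ≤ v j * u j := by
      intro j; rw [huvw]; have := hsc j; simp only [Pi.add_apply]; nlinarith [sq_nonneg (v j)]
    have hwu : ∀ j, 0 ≤ w j * u j := by
      intro j; rw [huvw]; have := hsc j; simp only [Pi.add_apply]; nlinarith [sq_nonneg (w j)]
    refine ⟨N1 + N2, Fin.append h1 h2, ?_, ?_, ?_, ?_⟩
    · intro k
      refine Fin.addCases (fun k1 => ?_) (fun k2 => ?_) k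
      · rw [Fin.append_left]; exact hg1 k1
      · rw [Fin.append_right]; exact hg2 k2
    · intro j
      rw [Fin.sum_univ_add]
      simp only [Fin.append_left, Fin.append_right, hs1 j, hs2 j, huvw, Pi.add_apply]
    · intro k j
      refine Fin.addCases (fun k1 => ?_) (fun k2 => ?_) k
      · rw [Fin.append_left]
        by_cases hvj : v j = 0
        · have : |h1 k1 j| = 0 := by
            have hz : ∑ k, |h1 k j| = 0 := by rw [ha1 j, hvj, abs_zero]
            have := (Finset.sum_eq_zero_iff_of_nonneg (fun k _ => abs_nonneg (h1 k j))).mp hz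
              k1 (Finset.mem_univ k1)
            exact this
          have : h1 k1 j = 0 := abs_eq_zero.mp this
          simp [this]
        · exact sign_trans _ _ _ (hc1 k1 j) (hvu j) hvj
      · rw [Fin.append_right]
        by_cases hwj : w j = 0
        · have : |h2 k2 j| = 0 := by
            have hz : ∑ k, |h2 k j| = 0 := by rw [ha2 j, hwj, abs_zero]
            exact (Finset.sum_eq_zero_iff_of_nonneg (fun k _ => abs_nonneg (h2 k j))).mp hz
              k2 (Finset.mem_univ k2)
          have : h2 k2 j = 0 := abs_eq_zero.mp this
          simp [this]
        · exact sign_trans _ _ _ (hc2 k2 j) (hwu j) hwj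
    · intro j
      rw [Fin.sum_univ_add]
      simp only [Fin.append_left, Fin.append_right, ha1 j, ha2 j]
      exact (habs j).symm


lemma abs_list_sum_le {α : Type*} (f : α → ℤ) (M : ℤ) (hf : ∀ a, |f a| ≤ M) :
    ∀ L : List α, |(L.map f).sum| ≤ (L.length : ℤ) * M := by
  intro L
  induction L with
  | nil => simp
  | cons a L ih =>
    simp only [List.map_cons, List.sum_cons, List.length_cons]
    calc |f a + (L.map f).sum| ≤ |f a| + |(L.map f).sum| := abs_add_le _ _
      _ ≤ M + (L.length : ℤ) * M := add_le_add (hf a) ih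
      _ = ((L.length : ℤ) + 1) * M := by ring
      _ = ((L.length + 1 : ℕ) : ℤ) * M := by push_cast; ring

section Steinitz

variable {r N : ℕ} (v : Fin N → Fin r → ℤ)

/-- A set of indices is *good* if there is a fractional certificate. -/
def GoodSet (S : Finset (Fin N)) : Prop :=
  ∃ lam : Fin N → ℚ, (∀ k ∈ S, 0 ≤ lam k) ∧ (∀ k ∈ S, lam k ≤ 1) ∧
    (∑ k ∈ S, lam k = (S.card : ℚ) - r) ∧ (∀ j, ∑ k ∈ S, lam k * (v k j : ℚ) = 0)

lemma goodset_bound {M : ℤ} (hM0 : 0 ≤ M) (hbd : ∀ k j, |v k j| ≤ M) {S : Finset (Fin N)}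
    (hS : GoodSet v S) (j : Fin r) : |∑ k ∈ S, v k j| ≤ (r : ℤ) * M := by
  obtain ⟨lam, h0, h1, hsum, hv⟩ := hS
  have hM : (0:ℚ) ≤ M := by exact_mod_cast hM0
  have key : |∑ k ∈ S, (v k j : ℚ)| ≤ (r : ℚ) * M := by
    have e1 : ∑ k ∈ S, (v k j : ℚ) = ∑ k ∈ S, (1 - lam k) * (v k j : ℚ) := by
      rw [Finset.sum_congr rfl fun k _ => (sub_mul 1 (lam k) _)]
      rw [Finset.sum_sub_distrib, hv j, sub_zero]
      simp
    rw [e1]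
    calc |∑ k ∈ S, (1 - lam k) * (v k j : ℚ)|
        ≤ ∑ k ∈ S, |(1 - lam k) * (v k j : ℚ)| := Finset.abs_sum_le_sum_abs _ _
      _ ≤ ∑ k ∈ S, (1 - lam k) * M := by
          refine Finset.sum_le_sum fun k hk => ?_
          rw [abs_mul, abs_of_nonneg (by linarith [h1 k hk])]
          refine mul_le_mul_of_nonneg_left ?_ (by linarith [h1 k hk])
          have := hbd k j
          calc |(v k j : ℚ)| = ((|v k j| : ℤ) : ℚ) := by push_cast; rfl
            _ ≤ (M : ℚ) := by exact_mod_cast this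
      _ = ((S.card : ℚ) - ∑ k ∈ S, lam k) * M := by
          rw [← Finset.sum_mul, Finset.sum_sub_distrib, Finset.sum_const, nsmul_eq_mul, mul_one]
      _ = (r : ℚ) * M := by rw [hsum]; ring
  have : ((|∑ k ∈ S, v k j| : ℤ) : ℚ) ≤ ((r : ℤ) * M : ℤ) := by
    push_cast
    push_cast at key
    exact key
  exact_mod_cast this

lemma goodset_shrink {S : Finset (Fin N)} (hS : GoodSet v S) (hcard : r + 1 ≤ S.card) :
    ∃ k₀ ∈ S, GoodSet v (S.erase k₀) := by
  classical
  set V : Fin N → Fin r → ℚ := fun k j => ((v k j : ℤ) : ℚ) with hV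
  -- feasibility predicate with target sum `card - 1 - r`
  set Feas : (Fin N → ℚ) → Prop := fun mu =>
    (∀ k ∈ S, 0 ≤ mu k) ∧ (∀ k ∈ S, mu k ≤ 1) ∧
    (∑ k ∈ S, mu k = (S.card : ℚ) - 1 - r) ∧ (∀ j, ∑ k ∈ S, mu k * V k j = 0) with hFeas
  have hdenpos : (0:ℚ) < (S.card : ℚ) - r := by
    have : (r:ℚ) + 1 ≤ (S.card : ℚ) := by exact_mod_cast hcard
    linarith
  have hfeas0 : ∃ mu, Feas mu := by
    obtain ⟨lam, h0, h1, hsum, hv⟩ := hS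
    set c : ℚ := ((S.card : ℚ) - 1 - r) / ((S.card : ℚ) - r) with hc
    have hc0 : 0 ≤ c := by
      apply div_nonneg _ hdenpos.le
      have : (r:ℚ) + 1 ≤ (S.card : ℚ) := by exact_mod_cast hcard
      linarith
    have hc1 : c ≤ 1 := by
      rw [div_le_one hdenpos]; linarith
    refine ⟨fun k => c * lam k, fun k hk => mul_nonneg hc0 (h0 k hk),
      fun k hk => ?_, ?_, fun j => ?_⟩
    · calc c * lam k ≤ 1 * 1 := by
            apply mul_le_mul hc1 (h1 k hk) (h0 k hk) zero_le_one
        _ = 1 := by ring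
    · rw [← Finset.mul_sum, hsum, hc, div_mul_cancel₀ _ hdenpos.ne']
    · simp only [mul_assoc, ← Finset.mul_sum, hv j, mul_zero]; exact mul_eq_zero_of_right _ (hv j)
  -- purification
  -- auxiliary facts when no coordinate vanishes
  have hone : ∀ (mu : Fin N → ℚ), Feas mu → (¬ ∃ k₀ ∈ S, mu k₀ = 0) →
      ∀ k ∈ S, k ∉ S.filter (fun k => 0 < mu k ∧ mu k < 1) → mu k = 1 := by
    intro mu hmu hexz k hk hkF
    push_neg at hexz
    have h1 := hmu.2.1 k hk
    have h2 : 0 < mu k := lt_of_le_of_ne (hmu.1 k hk) (Ne.symm (hexz k hk))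
    by_contra hne
    exact hkF (Finset.mem_filter.mpr ⟨hk, h2, lt_of_le_of_ne h1 hne⟩)
  have hFsum : ∀ (mu : Fin N → ℚ), Feas mu → (¬ ∃ k₀ ∈ S, mu k₀ = 0) →
      ∑ k ∈ S.filter (fun k => 0 < mu k ∧ mu k < 1), mu k =
        ((S.filter (fun k => 0 < mu k ∧ mu k < 1)).card : ℚ) - 1 - r := by
    intro mu hmu hexz
    set F := S.filter (fun k => 0 < mu k ∧ mu k < 1) with hFdef
    have hsub : F ⊆ S := Finset.filter_subset _ S
    have h2 := Finset.sum_sdiff (f := mu) hsub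
    have h2' : ∑ k ∈ S \ F, mu k = ((S \ F).card : ℚ) := by
      have : ∀ k ∈ S \ F, mu k = 1 := by
        intro k hk
        rw [Finset.mem_sdiff] at hk
        exact hone mu hmu hexz k hk.1 hk.2
      rw [Finset.sum_congr rfl this]
      simp
    have h3 : (S \ F).card = S.card - F.card := Finset.card_sdiff_of_subset hsub
    have h4 : F.card ≤ S.card := Finset.card_le_card hsub
    have h5 : ((S \ F).card : ℚ) = (S.card : ℚ) - (F.card : ℚ) := by
      rw [h3]
      push_cast [Nat.cast_sub h4]
      ring
    have h6 := hmu.2.2.1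
    rw [h2', h5] at h2
    linarith
  have frac_lb : ∀ (mu : Fin N → ℚ), Feas mu → (¬ ∃ k₀ ∈ S, mu k₀ = 0) →
      r + 2 ≤ (S.filter (fun k => 0 < mu k ∧ mu k < 1)).card := by
    intro mu hmu hexz
    by_contra hlt
    push_neg at hlt
    have hFs := hFsum mu hmu hexz
    rcases Finset.eq_empty_or_nonempty (S.filter (fun k => 0 < mu k ∧ mu k < 1)) with hFe | hFne
    · rw [hFe] at hFs
      simp at hFs
      have : (0:ℚ) ≤ r := Nat.cast_nonneg r
      linarith
    · have hFpos : 0 < ∑ k ∈ S.filter (fun k => 0 < mu k ∧ mu k < 1), mu k :=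
        Finset.sum_pos (fun k hk => (Finset.mem_filter.mp hk).2.1) hFne
      rw [hFs] at hFpos
      have : ((S.filter (fun k => 0 < mu k ∧ mu k < 1)).card : ℚ) ≤ (r:ℚ) + 1 := by
        have : (S.filter (fun k => 0 < mu k ∧ mu k < 1)).card ≤ r + 1 := by omega
        exact_mod_cast this
      linarith
  have key : ∀ (fc : ℕ) (mu : Fin N → ℚ), Feas mu →
      (S.filter (fun k => 0 < mu k ∧ mu k < 1)).card ≤ fc →
      ∃ k₀ ∈ S, ∃ mu', Feas mu' ∧ mu' k₀ = 0 := by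
    intro fc
    induction fc with
    | zero =>
      intro mu hmu hfc
      by_cases hexz : ∃ k₀ ∈ S, mu k₀ = 0
      · obtain ⟨k₀, hk₀, h0⟩ := hexz
        exact ⟨k₀, hk₀, mu, hmu, h0⟩
      exact absurd (frac_lb mu hmu hexz) (by omega)
    | succ fc ih =>
      intro mu hmu hfc
      by_cases hexz : ∃ k₀ ∈ S, mu k₀ = 0
      · obtain ⟨k₀, hk₀, h0⟩ := hexz
        exact ⟨k₀, hk₀, mu, hmu, h0⟩
      have hpos : ∀ k ∈ S, 0 < mu k := by
        push_neg at hexz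
        exact fun k hk => lt_of_le_of_ne (hmu.1 k hk) (Ne.symm (hexz k hk))
      have hFlb := frac_lb mu hmu hexz
      set F := S.filter (fun k => 0 < mu k ∧ mu k < 1) with hFdef
      -- linear dependence among the vectors (1, V k)
      have hcardF : r + 1 < Fintype.card (↥F) := by
        rw [Fintype.card_coe]; omega
      have hnli : ¬ LinearIndependent ℚ
          (fun i : ↥F => (Fin.cons 1 (fun j => V (↑i) j) : Fin (r+1) → ℚ)) := by
        intro hli
        have h1 := hli.fintype_card_le_finrank
        rw [Module.finrank_pi] at h1
        rw [Fintype.card_fin] at h1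
        omega
      obtain ⟨gc, hgc, i0, hi0⟩ := Fintype.not_linearIndependent_iff.mp hnli
      set z : Fin N → ℚ := fun k => if h : k ∈ F then gc ⟨k, h⟩ else 0 with hzdef
      have hzF : ∀ k, k ∉ F → z k = 0 := fun k hk => dif_neg hk
      have hzeq : ∀ i : ↥F, z ↑i = gc i := by
        intro i
        rw [hzdef]
        simp only
        rw [dif_pos i.2]
      have hzsum : ∑ k ∈ F, z k = 0 := by
        have h1 := congrFun hgc 0
        rw [Finset.sum_apply] at h1
        simp only [Pi.smul_apply, Fin.cons_zero, smul_eq_mul, mul_one, Pi.zero_apply] at h1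
        calc ∑ k ∈ F, z k = ∑ i ∈ F.attach, z ↑i := (Finset.sum_attach F z).symm
          _ = ∑ i : ↥F, gc i := by
              rw [← Finset.univ_eq_attach]
              exact Finset.sum_congr rfl fun i _ => hzeq i
          _ = 0 := h1
      have hzsumV : ∀ j, ∑ k ∈ F, z k * V k j = 0 := by
        intro j
        have h1 := congrFun hgc j.succ
        rw [Finset.sum_apply] at h1
        simp only [Pi.smul_apply, Fin.cons_succ, smul_eq_mul, Pi.zero_apply] at h1
        calc ∑ k ∈ F, z k * V k j = ∑ i ∈ F.attach, z ↑i * V ↑i j :=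
              (Finset.sum_attach F (fun k => z k * V k j)).symm
          _ = ∑ i : ↥F, gc i * V ↑i j := by
              rw [← Finset.univ_eq_attach]
              exact Finset.sum_congr rfl fun i _ => by rw [hzeq i]
          _ = 0 := h1
      have hsubF : F ⊆ S := by rw [hFdef]; exact Finset.filter_subset _ S
      have hzS : ∑ k ∈ S, z k = 0 := by
        rw [← Finset.sum_sdiff (f := z) hsubF]
        rw [Finset.sum_eq_zero (fun k hk => hzF k (Finset.mem_sdiff.mp hk).2), hzsum]
        ring
      have hzSV : ∀ j, ∑ k ∈ S, z k * V k j = 0 := by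
        intro j
        rw [← Finset.sum_sdiff (f := fun k => z k * V k j) hsubF]
        rw [Finset.sum_eq_zero (fun k hk => by rw [hzF k (Finset.mem_sdiff.mp hk).2, zero_mul]),
          hzsumV j]
        ring
      have hzne : z ↑i0 ≠ 0 := by rw [hzeq i0]; exact hi0
      set T := F.filter (fun k => z k ≠ 0) with hTdef
      have hTne : T.Nonempty := ⟨↑i0, Finset.mem_filter.mpr ⟨i0.2, hzne⟩⟩
      set τ : Fin N → ℚ := fun k => if 0 < z k then mu k / z k else (1 - mu k) / (-z k) with hτdef
      have hτpos : ∀ k ∈ T, 0 < τ k := by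
        intro k hk
        obtain ⟨hkF, hkz⟩ := Finset.mem_filter.mp hk
        obtain ⟨hkS, hk0, hk1⟩ := Finset.mem_filter.mp hkF
        rw [hτdef]
        simp only
        by_cases hz : 0 < z k
        · rw [if_pos hz]; exact div_pos hk0 hz
        · have hzneg : z k < 0 := lt_of_le_of_ne (not_lt.mp hz) hkz
          rw [if_neg hz]
          exact div_pos (by linarith) (by linarith)
      have hTim : (T.image τ).Nonempty := by
        obtain ⟨k1, hk1⟩ := hTne
        exact ⟨τ k1, Finset.mem_image_of_mem τ hk1⟩
      set tm := (T.image τ).min' hTim with htmdef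
      obtain ⟨ks, hksT, hks⟩ := Finset.mem_image.mp ((T.image τ).min'_mem hTim)
      have htm_le : ∀ k ∈ T, tm ≤ τ k := fun k hk =>
        Finset.min'_le _ _ (Finset.mem_image_of_mem τ hk)
      have htm_pos : 0 < tm := by
        have h := hτpos ks hksT
        rw [hks] at h
        exact h
      set mu2 : Fin N → ℚ := fun k => mu k - tm * z k with hmu2def
      have hmu2z : ∀ k, z k = 0 → mu2 k = mu k := by
        intro k hk; rw [hmu2def]; simp [hk]
      have hstep : ∀ k ∈ S, 0 ≤ mu2 k ∧ mu2 k ≤ 1 := by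
        intro k hkS
        by_cases hkz : z k = 0
        · rw [hmu2z k hkz]; exact ⟨hmu.1 k hkS, hmu.2.1 k hkS⟩
        · have hkF : k ∈ F := by
            by_contra hc; exact hkz (hzF k hc)
          have hkT : k ∈ T := Finset.mem_filter.mpr ⟨hkF, hkz⟩
          obtain ⟨_, hk0, hk1⟩ := Finset.mem_filter.mp hkF
          have hle := htm_le k hkT
          rw [hτdef] at hle
          simp only at hle
          rw [hmu2def]
          simp only
          by_cases hz : 0 < z k
          · rw [if_pos hz] at hle
            have h1 : tm * z k ≤ mu k := by
              have := (le_div_iff₀ hz).mp hle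
              linarith
            have h2 : 0 < tm * z k := mul_pos htm_pos hz
            constructor <;> linarith
          · have hzneg : z k < 0 := lt_of_le_of_ne (not_lt.mp hz) hkz
            rw [if_neg hz] at hle
            have h1 : tm * (-z k) ≤ 1 - mu k := (le_div_iff₀ (by linarith)).mp hle
            have h2 : 0 < tm * (-z k) := mul_pos htm_pos (by linarith)
            constructor <;> nlinarith
      have hFeas2 : Feas mu2 := by
        refine ⟨fun k hk => (hstep k hk).1, fun k hk => (hstep k hk).2, ?_, ?_⟩
        · have he : ∑ k ∈ S, mu2 k = ∑ k ∈ S, mu k - tm * ∑ k ∈ S, z k := by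
            rw [hmu2def, Finset.mul_sum, ← Finset.sum_sub_distrib]
          rw [he, hzS, mul_zero, sub_zero, hmu.2.2.1]
        · intro j
          have he : ∑ k ∈ S, mu2 k * V k j =
              ∑ k ∈ S, mu k * V k j - tm * ∑ k ∈ S, z k * V k j := by
            rw [hmu2def, Finset.mul_sum, ← Finset.sum_sub_distrib]
            exact Finset.sum_congr rfl fun k _ => by ring
          rw [he, hzSV j, mul_zero, sub_zero, hmu.2.2.2 j]
      obtain ⟨hksF, hksz⟩ := Finset.mem_filter.mp hksT
      have hks2 : mu2 ks = 0 ∨ mu2 ks = 1 := by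
        rw [hmu2def]
        simp only
        rw [htmdef, ← hks, hτdef]
        simp only
        by_cases hz : 0 < z ks
        · left; rw [if_pos hz]; field_simp; ring
        · right; rw [if_neg hz]
          have h5 : (1 - mu ks) / -z ks * z ks = -(1 - mu ks) := by
            rw [div_mul_eq_mul_div, div_neg, neg_eq_iff_eq_neg, div_eq_iff hksz]
            ring
          rw [h5]; ring
      have hsubnew : S.filter (fun k => 0 < mu2 k ∧ mu2 k < 1) ⊆ F.erase ks := by
        intro k hk
        obtain ⟨hkS, hk0, hk1⟩ := Finset.mem_filter.mp hk
        have hkF : k ∈ F := by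
          by_contra hc
          have hz0 : z k = 0 := hzF k hc
          have heq : mu2 k = mu k := hmu2z k hz0
          have h1 : mu k = 1 := hone mu hmu hexz k hkS hc
          rw [heq, h1] at hk1
          exact absurd hk1 (lt_irrefl 1)
        refine Finset.mem_erase.mpr ⟨?_, hkF⟩
        rintro rfl
        rcases hks2 with h | h
        · rw [h] at hk0; exact absurd hk0 (lt_irrefl 0)
        · rw [h] at hk1; exact absurd hk1 (lt_irrefl 1)
      have hcard2 : (S.filter (fun k => 0 < mu2 k ∧ mu2 k < 1)).card ≤ fc := by
        have h1 := Finset.card_le_card hsubnew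
        have h2 : (F.erase ks).card = F.card - 1 :=
          Finset.card_erase_of_mem (Finset.mem_of_mem_filter ks hksT)
        have h3 : F.card ≤ fc + 1 := hfc
        omega
      exact ih mu2 hFeas2 hcard2

  obtain ⟨mu, hmu⟩ := hfeas0
  obtain ⟨k₀, hk₀S, mu', hmu', hz⟩ := key _ mu hmu le_rfl
  refine ⟨k₀, hk₀S, mu', fun k hk => hmu'.1 k (Finset.mem_of_mem_erase hk),
    fun k hk => hmu'.2.1 k (Finset.mem_of_mem_erase hk), ?_, fun j => ?_⟩
  · have := Finset.sum_erase_add S mu' hk₀S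
    have hcc : ((S.erase k₀).card : ℚ) = (S.card : ℚ) - 1 := by
      rw [Finset.card_erase_of_mem hk₀S]
      have : 1 ≤ S.card := by omega
      push_cast [Nat.cast_sub this]
      ring
    rw [hcc]
    have h2 := hmu'.2.2.1
    linarith [this, hz ▸ this]
  · have := Finset.sum_erase_add S (fun k => mu' k * V k j) hk₀S
    have h2 := hmu'.2.2.2 j
    simp only [hz, zero_mul, add_zero] at this
    rw [this, h2]

lemma goodset_chain {M : ℤ} (hM0 : 0 ≤ M) (hbd : ∀ k j, |v k j| ≤ M) :
    ∀ (c : ℕ) (S : Finset (Fin N)), S.card ≤ c → GoodSet v S →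
    ∃ l : List (Fin N), l.Nodup ∧ l.toFinset = S ∧
      ∀ m j, |((l.take m).map (fun k => v k j)).sum| ≤ (r : ℤ) * M := by
  intro c
  induction c with
  | zero =>
    intro S hc hS
    have hSe : S = ∅ := Finset.card_eq_zero.mp (le_antisymm hc (Nat.zero_le _))
    refine ⟨[], List.nodup_nil, by simp [hSe], ?_⟩
    intro m j
    simp only [List.take_nil, List.map_nil, List.sum_nil, abs_zero]
    positivity
  | succ c ih =>
    intro S hc hS
    by_cases hsc : S.card ≤ r
    · refine ⟨S.toList, S.nodup_toList, S.toList_toFinset, ?_⟩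
      intro m j
      calc |((S.toList.take m).map (fun k => v k j)).sum|
          ≤ ((S.toList.take m).length : ℤ) * M := abs_list_sum_le _ M (fun k => hbd k j) _
        _ ≤ (r : ℤ) * M := by
            refine mul_le_mul_of_nonneg_right ?_ hM0
            have h1 : (S.toList.take m).length ≤ S.toList.length := by
              rw [List.length_take]; omega
            rw [S.length_toList] at h1
            exact_mod_cast le_trans h1 hsc
    · push_neg at hsc
      obtain ⟨k₀, hk₀S, hGe⟩ := goodset_shrink v hS hsc
      have hce : (S.erase k₀).card ≤ c := by
        rw [Finset.card_erase_of_mem hk₀S]; omega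
      obtain ⟨l', hnd', htf', hbd'⟩ := ih (S.erase k₀) hce hGe
      have hk₀nl : k₀ ∉ l' := by
        intro hmem
        have : k₀ ∈ (S.erase k₀) := htf' ▸ List.mem_toFinset.mpr hmem
        exact (Finset.mem_erase.mp this).1 rfl
      have hnd : (l' ++ [k₀]).Nodup := by
        rw [List.nodup_append]
        exact ⟨hnd', List.nodup_singleton k₀, by
          intro a ha b hb
          simp only [List.mem_singleton] at hb
          subst hb
          exact fun hab => hk₀nl (hab ▸ ha)⟩
      have htf : (l' ++ [k₀]).toFinset = S := by
        rw [List.toFinset_append, htf']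
        rw [Finset.union_comm]
        simp only [List.toFinset_cons, List.toFinset_nil, LawfulSingleton.insert_empty_eq]
        rw [← Finset.insert_eq, Finset.insert_erase hk₀S]
      refine ⟨l' ++ [k₀], hnd, htf, ?_⟩
      intro m j
      rcases le_or_gt m l'.length with hm | hm
      · rw [List.take_append_of_le_length hm]
        exact hbd' m j
      · have hlen : (l' ++ [k₀]).length ≤ m := by
          rw [List.length_append]; simp; omega
        rw [List.take_of_length_le hlen]
        have hsum : (((l' ++ [k₀])).map (fun k => v k j)).sum = ∑ k ∈ S, v k j := by
          rw [← htf, List.sum_toFinset _ hnd]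
        rw [hsum]
        exact goodset_bound v hM0 hbd hS j

lemma steinitz_exists {M : ℤ} (hM0 : 0 ≤ M) (hbd : ∀ k j, |v k j| ≤ M)
    (hsum : ∀ j, ∑ k, v k j = 0) :
    ∃ l : List (Fin N), l.Nodup ∧ l.toFinset = Finset.univ ∧
      ∀ m j, |((l.take m).map (fun k => v k j)).sum| ≤ (r : ℤ) * M := by
  by_cases hNr : N ≤ r
  · refine ⟨(Finset.univ : Finset (Fin N)).toList, Finset.nodup_toList _,
      Finset.toList_toFinset _, ?_⟩
    intro m j
    calc |(((Finset.univ : Finset (Fin N)).toList.take m).map (fun k => v k j)).sum|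
        ≤ (((Finset.univ : Finset (Fin N)).toList.take m).length : ℤ) * M :=
          abs_list_sum_le _ M (fun k => hbd k j) _
      _ ≤ (r : ℤ) * M := by
          refine mul_le_mul_of_nonneg_right ?_ hM0
          have h1 : ((Finset.univ : Finset (Fin N)).toList.take m).length ≤
              (Finset.univ : Finset (Fin N)).toList.length := by
            rw [List.length_take]; omega
          rw [Finset.length_toList, Finset.card_univ, Fintype.card_fin] at h1
          exact_mod_cast le_trans h1 hNr
  · push_neg at hNr
    have hN0 : (0:ℚ) < N := by exact_mod_cast Nat.lt_of_lt_of_le (Nat.zero_lt_succ r) hNr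
    have hGood : GoodSet v (Finset.univ : Finset (Fin N)) := by
      refine ⟨fun _ => ((N:ℚ) - r)/N, fun k _ => ?_, fun k _ => ?_, ?_, fun j => ?_⟩
      · apply div_nonneg _ hN0.le
        have : (r:ℚ) ≤ N := by exact_mod_cast hNr.le
        linarith
      · rw [div_le_one hN0]
        have : (0:ℚ) ≤ r := Nat.cast_nonneg r
        linarith
      · rw [Finset.sum_const, Finset.card_univ, Fintype.card_fin, nsmul_eq_mul,
          mul_div_cancel₀ _ hN0.ne']
      · rw [← Finset.mul_sum]
        have : ∑ k, ((v k j : ℤ) : ℚ) = 0 := by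
          have := hsum j
          exact_mod_cast congrArg (fun x : ℤ => (x : ℚ)) this
        rw [this, mul_zero]
    have := goodset_chain v hM0 hbd N Finset.univ (by simp) hGood
    simpa using this

end Steinitz

lemma block_graver_bound
    (n : ℕ) (t s : Fin n → ℕ)
    (B : (i : Fin n) → Matrix (Fin (s i)) (Fin (t i)) ℤ)
    (G : ℤ)
    (hG : ∀ i g, InGraver (B i) g → ∑ j, |g j| ≤ G)
    (D : Matrix (Σ i : Fin n, Fin (s i)) (Σ i : Fin n, Fin (t i)) ℤ)
    (hD : ∀ (col : Σ i : Fin n, Fin (t i)) (row : Σ i : Fin n, Fin (s i)),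
      D row col = if h : col.1 = row.1 then B row.1 row.2 (h ▸ col.2) else 0)
    (u : (Σ i : Fin n, Fin (t i)) → ℤ) (hu : InGraver D u) :
    ∑ col, |u col| ≤ G := by
  obtain ⟨hune, huker, huind⟩ := hu
  obtain ⟨col₀, hcol₀⟩ := Function.ne_iff.mp hune
  obtain ⟨i, j₀⟩ := col₀
  simp only [Pi.zero_apply] at hcol₀
  have hDrc : ∀ (row : Σ i' : Fin n, Fin (s i')) col, col.1 ≠ row.1 → D row col = 0 := by
    intro row col h; rw [hD col row, dif_neg h]
  have hmv : ∀ (x : (Σ i' : Fin n, Fin (t i')) → ℤ) row,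
      D.mulVec x row = ∑ col, D row col * x col := by
    intro x row; simp [Matrix.mulVec, dotProduct]
  have hsig : ∀ (f : (Σ i' : Fin n, Fin (t i')) → ℤ),
      ∑ col, f col = ∑ i', ∑ j, f ⟨i', j⟩ := by
    intro f; rw [← Finset.univ_sigma_univ, Finset.sum_sigma]
  -- u is supported on block i
  have hsupp : ∀ col : Σ i' : Fin n, Fin (t i'), col.1 ≠ i → u col = 0 := by
    by_contra hc
    push_neg at hc
    obtain ⟨col₁, hne1, hu1⟩ := hc
    set vv : (Σ i' : Fin n, Fin (t i')) → ℤ := fun col => if col.1 = i then u col else 0 with hvv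
    have hvker : D.mulVec vv = 0 := by
      funext row
      rw [hmv]
      by_cases hri : row.1 = i
      · have heach : ∀ col, D row col * vv col = D row col * u col := by
          intro col
          by_cases hci : col.1 = i
          · simp [hvv, hci]
          · rw [hDrc row col (by rw [hri]; exact hci), zero_mul, zero_mul]
        rw [Finset.sum_congr rfl (fun col _ => heach col), ← hmv, huker]
      · apply Finset.sum_eq_zero
        intro col _
        by_cases hci : col.1 = i
        · rw [hDrc row col (fun hcr => hri (hcr ▸ hci)), zero_mul]
        · simp [hvv, hci]
    apply huind
    refine ⟨vv, u - vv, ?_, ?_, hvker, ?_, ?_, ?_⟩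
    · intro h
      apply hcol₀
      have := congrFun h ⟨i, j₀⟩
      simpa [hvv] using this
    · intro h
      apply hu1
      have := congrFun h col₁
      simp only [hvv, Pi.sub_apply, Pi.zero_apply] at this
      rw [if_neg hne1] at this
      simpa using this
    · rw [Matrix.mulVec_sub, huker, hvker, sub_self]
    · intro col
      by_cases hci : col.1 = i
      · simp [hvv, hci]
      · simp [hvv, hci]
    · funext col; simp
  -- the restriction to block i
  set ub : Fin (t i) → ℤ := fun j => u ⟨i, j⟩ with hub
  -- a helper: block-diagonal kernel membership of zero-extensions
  have hEker : ∀ (x : Fin (t i) → ℤ) (E : (Σ i' : Fin n, Fin (t i')) → ℤ),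
      (∀ j, E ⟨i, j⟩ = x j) → (∀ col : Σ i' : Fin n, Fin (t i'), col.1 ≠ i → E col = 0) →
      (B i).mulVec x = 0 → D.mulVec E = 0 := by
    intro x E hE1 hE2 hx
    funext row
    rw [hmv, hsig (fun col => D row col * E col)]
    rw [Finset.sum_eq_single_of_mem i (Finset.mem_univ i)
      (fun i' _ hne => Finset.sum_eq_zero fun j _ => by rw [hE2 ⟨i', j⟩ hne, mul_zero])]
    obtain ⟨ri, ρ⟩ := row
    by_cases hri : ri = i
    · subst hri
      have heach : ∀ j, D ⟨ri, ρ⟩ ⟨ri, j⟩ * E ⟨ri, j⟩ = B ri ρ j * x j := by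
        intro j
        rw [hE1 j, hD]
        exact congrArg (· * x j) (dif_pos rfl)
      rw [Finset.sum_congr rfl (fun j _ => heach j)]
      have h0 := congrFun hx ρ
      simp only [Matrix.mulVec, dotProduct, Pi.zero_apply] at h0
      exact h0
    · apply Finset.sum_eq_zero
      intro j _
      rw [hDrc ⟨ri, ρ⟩ ⟨i, j⟩ (fun hcr => hri hcr.symm), zero_mul]
  -- ub is in the kernel of B i
  have hubker : (B i).mulVec ub = 0 := by
    funext ρ
    have h0 := congrFun huker ⟨i, ρ⟩
    rw [hmv, hsig (fun col => D ⟨i, ρ⟩ col * u col)] at h0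
    rw [Finset.sum_eq_single_of_mem i (Finset.mem_univ i)
      (fun i' _ hne => Finset.sum_eq_zero fun j _ => by rw [hsupp ⟨i', j⟩ hne, mul_zero])] at h0
    have heach : ∀ j, D ⟨i, ρ⟩ ⟨i, j⟩ * u ⟨i, j⟩ = B i ρ j * ub j := by
      intro j
      rw [hD]
      exact congrArg (· * u ⟨i, j⟩) (dif_pos rfl)
    rw [Finset.sum_congr rfl (fun j _ => heach j)] at h0
    simp only [Matrix.mulVec, dotProduct, Pi.zero_apply]
    exact h0
  -- ub is a Graver element of B i
  have hubgr : InGraver (B i) ub := by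
    refine ⟨?_, hubker, ?_⟩
    · intro h
      exact hcol₀ (congrFun h j₀)
    · rintro ⟨vb, wb, hvb0, hwb0, hvbker, hwbker, hsc, heq⟩
      apply huind
      set Ev : (Σ i' : Fin n, Fin (t i')) → ℤ :=
        fun col => if h : col.1 = i then vb (h ▸ col.2) else 0 with hEv
      set Ew : (Σ i' : Fin n, Fin (t i')) → ℤ :=
        fun col => if h : col.1 = i then wb (h ▸ col.2) else 0 with hEw
      have hEv1 : ∀ j, Ev ⟨i, j⟩ = vb j := fun j => dif_pos rfl
      have hEw1 : ∀ j, Ew ⟨i, j⟩ = wb j := fun j => dif_pos rfl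
      have hEv2 : ∀ col : Σ i' : Fin n, Fin (t i'), col.1 ≠ i → Ev col = 0 :=
        fun col h => dif_neg h
      have hEw2 : ∀ col : Σ i' : Fin n, Fin (t i'), col.1 ≠ i → Ew col = 0 :=
        fun col h => dif_neg h
      refine ⟨Ev, Ew, ?_, ?_, hEker vb Ev hEv1 hEv2 hvbker, hEker wb Ew hEw1 hEw2 hwbker, ?_, ?_⟩
      · intro h
        obtain ⟨j, hj⟩ := Function.ne_iff.mp hvb0
        apply hj
        have := congrFun h ⟨i, j⟩
        rw [hEv1 j] at this
        simpa using this
      · intro h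
        obtain ⟨j, hj⟩ := Function.ne_iff.mp hwb0
        apply hj
        have := congrFun h ⟨i, j⟩
        rw [hEw1 j] at this
        simpa using this
      · rintro ⟨ci, cj⟩
        by_cases hci : ci = i
        · subst hci
          rw [hEv1 cj, hEw1 cj]
          exact hsc cj
        · rw [hEv2 ⟨ci, cj⟩ hci, zero_mul]
      · funext col
        obtain ⟨ci, cj⟩ := col
        simp only [Pi.add_apply]
        by_cases hci : ci = i
        · subst hci
          rw [hEv1 cj, hEw1 cj]
          exact congrFun heq cj
        · rw [hEv2 ⟨ci, cj⟩ hci, hEw2 ⟨ci, cj⟩ hci, hsupp ⟨ci, cj⟩ hci]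
          ring
  -- conclude
  calc ∑ col, |u col| = ∑ i', ∑ j, |u ⟨i', j⟩| := hsig (fun col => |u col|)
    _ = ∑ j, |ub j| := by
        rw [Finset.sum_eq_single_of_mem i (Finset.mem_univ i)
          (fun i' _ hne => Finset.sum_eq_zero fun j _ => by
            rw [hsupp ⟨i', j⟩ hne, abs_zero])]
    _ ≤ G := hG i ub hubgr


/-- If `C` consists of the linking rows `(A₁ ⋯ Aₙ)` on top of
the block-diagonal matrix `diag(B₁,…,Bₙ)`, entries of the `Aᵢ` are bounded by `Δ`
and Graver elements of the `Bᵢ` have `ℓ₁`-norm at most `G`, then every Graver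
element of `C` has `ℓ₁`-norm at most `G·(2rGΔ + 1)^r`. -/
theorem graver_norm_linked_blocks
    (n r : ℕ) (hr : 1 ≤ r)
    (t s : Fin n → ℕ)
    (A : (i : Fin n) → Matrix (Fin r) (Fin (t i)) ℤ)
    (B : (i : Fin n) → Matrix (Fin (s i)) (Fin (t i)) ℤ)
    (Δ G : ℤ) (hΔ1 : 1 ≤ Δ) (hG1 : 1 ≤ G)
    (hΔ : ∀ i k j, |A i k j| ≤ Δ)
    (hG : ∀ i g, InGraver (B i) g → ∑ j, |g j| ≤ G)
    (C : Matrix (Fin r ⊕ (Σ i : Fin n, Fin (s i))) (Σ i : Fin n, Fin (t i)) ℤ)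
    (hCtop : ∀ (col : Σ i : Fin n, Fin (t i)) (k : Fin r),
      C (Sum.inl k) col = A col.1 k col.2)
    (hCblock : ∀ (col : Σ i : Fin n, Fin (t i)) (row : Σ i : Fin n, Fin (s i)),
      C (Sum.inr row) col =
        if h : col.1 = row.1 then B row.1 row.2 (h ▸ col.2) else 0)
    (g : (Σ i : Fin n, Fin (t i)) → ℤ) (hg : InGraver C g) :
    ∑ col, |g col| ≤ G * (2 * (r : ℤ) * G * Δ + 1) ^ r := by
  classical
  obtain ⟨hgne, hgker, hgind⟩ := hg
  -- the block-diagonal bottom part of `C`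
  set D : Matrix (Σ i : Fin n, Fin (s i)) (Σ i : Fin n, Fin (t i)) ℤ :=
    fun row col => C (Sum.inr row) col with hDdef
  have hDblock : ∀ (col : Σ i : Fin n, Fin (t i)) (row : Σ i : Fin n, Fin (s i)),
      D row col = if h : col.1 = row.1 then B row.1 row.2 (h ▸ col.2) else 0 :=
    fun col row => hCblock col row
  have hDg : D.mulVec g = 0 := by
    funext row
    have h0 := congrFun hgker (Sum.inr row)
    simpa [Matrix.mulVec, dotProduct, hDdef] using h0
  obtain ⟨N, h, hgrav, hsum, hsgn, habs⟩ := exists_conformal_decomp D g hgne hDg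
  have hl1 : ∀ k, ∑ col, |h k col| ≤ G := fun k =>
    block_graver_bound n t s B G hG D hDblock (h k) (hgrav k)
  set M : ℤ := G * Δ with hM
  have hM0 : 0 ≤ M := by rw [hM]; exact mul_nonneg (by linarith) (by linarith)
  set a : Fin N → Fin r → ℤ := fun k ρ => ∑ col, C (Sum.inl ρ) col * h k col with ha
  have hker_a : ∀ k (row : Σ i : Fin n, Fin (s i)), ∑ col, D row col * h k col = 0 := by
    intro k row
    have h0 := congrFun (hgrav k).2.1 row
    simpa [Matrix.mulVec, dotProduct] using h0
  have habd : ∀ k ρ, |a k ρ| ≤ M := by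
    intro k ρ
    calc |a k ρ| ≤ ∑ col, |C (Sum.inl ρ) col * h k col| := Finset.abs_sum_le_sum_abs _ _
      _ ≤ ∑ col, Δ * |h k col| := by
          refine Finset.sum_le_sum fun col _ => ?_
          rw [abs_mul]
          exact mul_le_mul_of_nonneg_right (by rw [hCtop]; exact hΔ col.1 ρ col.2) (abs_nonneg _)
      _ = Δ * ∑ col, |h k col| := (Finset.mul_sum _ _ _).symm
      _ ≤ Δ * G := mul_le_mul_of_nonneg_left (hl1 k) (by linarith)
      _ = M := by rw [hM]; ring
  have hasum : ∀ ρ, ∑ k, a k ρ = 0 := by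
    intro ρ
    rw [ha]
    simp only
    rw [Finset.sum_comm]
    have e1 : ∀ col, ∑ k, C (Sum.inl ρ) col * h k col = C (Sum.inl ρ) col * g col := by
      intro col; rw [← Finset.mul_sum, hsum col]
    rw [Finset.sum_congr rfl (fun col _ => e1 col)]
    have h0 := congrFun hgker (Sum.inl ρ)
    simpa [Matrix.mulVec, dotProduct] using h0
  obtain ⟨l, hlnd, hltf, hlbd⟩ := steinitz_exists a hM0 habd hasum
  have hllen : l.length = N := by
    have h0 := List.toFinset_card_of_nodup hlnd
    rw [hltf, Finset.card_univ, Fintype.card_fin] at h0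
    omega
  set p : ℕ → Fin r → ℤ := fun m ρ => ((l.take m).map (fun k => a k ρ)).sum with hp
  set R : ℤ := (r : ℤ) * M with hR
  have hR0 : 0 ≤ R := mul_nonneg (Nat.cast_nonneg r) hM0
  have hNle : (N : ℤ) ≤ (2 * R + 1) ^ r := by
    by_contra hcon
    push_neg at hcon
    -- the contradiction machine: two equal prefix sums yield a decomposition of g
    have key : ∀ m₁ m₂, m₁ < m₂ → m₂ < N → p m₁ = p m₂ → False := by
      intro m₁ m₂ hlt hm₂N hpeq
      set Seg := (l.drop m₁).take (m₂ - m₁) with hSeg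
      have hsub : Seg.Sublist l := ((l.drop m₁).take_sublist _).trans (l.drop_sublist m₁)
      have hSegnd : Seg.Nodup := hlnd.sublist hsub
      have hSeglen : Seg.length = m₂ - m₁ := by
        rw [hSeg, List.length_take, List.length_drop, hllen]; omega
      have htake : l.take m₂ = l.take m₁ ++ Seg := by
        have e := List.take_add (l := l) (i := m₁) (j := m₂ - m₁)
        rw [hSeg, ← e]
        congr 1
        omega
      set S := Seg.toFinset with hSdef
      have hScard : S.card = m₂ - m₁ := by
        rw [hSdef, List.toFinset_card_of_nodup hSegnd, hSeglen]
      have hSsum : ∀ ρ, ∑ k ∈ S, a k ρ = 0 := by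
        intro ρ
        have h1 : (Seg.map (fun k => a k ρ)).sum = p m₂ ρ - p m₁ ρ := by
          rw [hp]
          simp only
          rw [htake, List.map_append, List.sum_append]
          ring
        have h2 := congrFun hpeq ρ
        rw [hSdef, List.sum_toFinset _ hSegnd, h1, ← h2]
        ring
      have hSne : S.Nonempty := by
        rw [← Finset.card_pos, hScard]; omega
      have hScne : Sᶜ.Nonempty := by
        rw [← Finset.card_pos, Finset.card_compl, Fintype.card_fin]
        omega
      have hacompl : ∀ ρ, ∑ k ∈ Sᶜ, a k ρ = 0 := by
        intro ρ
        have h1 := Finset.sum_add_sum_compl S (fun k => a k ρ)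
        rw [hSsum ρ, hasum ρ] at h1
        linarith
      set vv : (Σ i : Fin n, Fin (t i)) → ℤ := fun col => ∑ k ∈ S, h k col with hvv
      set ww : (Σ i : Fin n, Fin (t i)) → ℤ := fun col => ∑ k ∈ Sᶜ, h k col with hww
      have hnz : ∀ (T : Finset (Fin N)), T.Nonempty →
          (fun col => ∑ k ∈ T, h k col) ≠ 0 := by
        rintro T ⟨k₀, hk₀⟩ hzero
        obtain ⟨col, hcol⟩ := Function.ne_iff.mp (hgrav k₀).1
        simp only [Pi.zero_apply] at hcol
        have hgcol : |h k₀ col| ≤ |g col| := by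
          rw [← habs col]
          exact Finset.single_le_sum (fun k _ => abs_nonneg (h k col)) (Finset.mem_univ k₀)
        have hgne0 : g col ≠ 0 := by
          intro h0
          rw [h0, abs_zero] at hgcol
          exact hcol (abs_eq_zero.mp (le_antisymm hgcol (abs_nonneg _)))
        have h1 := congrFun hzero col
        simp only [Pi.zero_apply] at h1
        rcases lt_or_gt_of_ne hgne0 with hneg | hpos
        · have hle : ∀ k, h k col ≤ 0 := by
            intro k
            by_contra hk
            push_neg at hk
            have h2 := hsgn k col
            nlinarith
          have h4 := Finset.single_le_sum (f := fun k => -(h k col))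
            (fun k _ => neg_nonneg.mpr (hle k)) hk₀
          simp only [Finset.sum_neg_distrib] at h4
          have hk₀neg : h k₀ col < 0 := lt_of_le_of_ne (hle k₀) hcol
          linarith
        · have hle : ∀ k, 0 ≤ h k col := by
            intro k
            by_contra hk
            push_neg at hk
            have h2 := hsgn k col
            nlinarith
          have h3 : h k₀ col ≤ ∑ k ∈ T, h k col :=
            Finset.single_le_sum (fun k _ => hle k) hk₀
          have hk₀pos : 0 < h k₀ col := lt_of_le_of_ne (hle k₀) (Ne.symm hcol)
          linarith
      have hmv_top : ∀ (T : Finset (Fin N)) ρ,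
          C.mulVec (fun col => ∑ k ∈ T, h k col) (Sum.inl ρ) = ∑ k ∈ T, a k ρ := by
        intro T ρ
        calc C.mulVec (fun col => ∑ k ∈ T, h k col) (Sum.inl ρ)
            = ∑ col, C (Sum.inl ρ) col * ∑ k ∈ T, h k col := by
              simp [Matrix.mulVec, dotProduct]
          _ = ∑ col, ∑ k ∈ T, C (Sum.inl ρ) col * h k col :=
              Finset.sum_congr rfl fun col _ => Finset.mul_sum _ _ _
          _ = ∑ k ∈ T, ∑ col, C (Sum.inl ρ) col * h k col := Finset.sum_comm
          _ = ∑ k ∈ T, a k ρ := rfl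
      have hmv_bot : ∀ (T : Finset (Fin N)) (row : Σ i : Fin n, Fin (s i)),
          C.mulVec (fun col => ∑ k ∈ T, h k col) (Sum.inr row) = 0 := by
        intro T row
        calc C.mulVec (fun col => ∑ k ∈ T, h k col) (Sum.inr row)
            = ∑ col, D row col * ∑ k ∈ T, h k col := by
              simp [Matrix.mulVec, dotProduct, hDdef]
          _ = ∑ col, ∑ k ∈ T, D row col * h k col :=
              Finset.sum_congr rfl fun col _ => Finset.mul_sum _ _ _
          _ = ∑ k ∈ T, ∑ col, D row col * h k col := Finset.sum_comm
          _ = 0 := Finset.sum_eq_zero fun k _ => hker_a k row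
      apply hgind
      refine ⟨vv, ww, hnz S hSne, hnz Sᶜ hScne, ?_, ?_, ?_, ?_⟩
      · funext x
        cases x with
        | inl ρ =>
          rw [hvv]
          show C.mulVec _ (Sum.inl ρ) = 0
          rw [hmv_top S ρ, hSsum ρ]
        | inr row =>
          rw [hvv]
          show C.mulVec _ (Sum.inr row) = 0
          rw [hmv_bot S row]
      · funext x
        cases x with
        | inl ρ =>
          rw [hww]
          show C.mulVec _ (Sum.inl ρ) = 0
          rw [hmv_top Sᶜ ρ, hacompl ρ]
        | inr row =>
          rw [hww]
          show C.mulVec _ (Sum.inr row) = 0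
          rw [hmv_bot Sᶜ row]
      · intro col
        by_cases hg0 : g col = 0
        · have hz : ∀ k, h k col = 0 := by
            intro k
            have h0 : ∑ k, |h k col| = 0 := by rw [habs col, hg0, abs_zero]
            exact abs_eq_zero.mp
              ((Finset.sum_eq_zero_iff_of_nonneg (fun k _ => abs_nonneg _)).mp h0 k
                (Finset.mem_univ k))
          have hvz : vv col = 0 := by
            rw [hvv]; exact Finset.sum_eq_zero fun k _ => hz k
          rw [hvz, zero_mul]
        · have h1 : 0 ≤ vv col * g col := by
            rw [hvv]
            simp only
            rw [Finset.sum_mul]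
            exact Finset.sum_nonneg fun k _ => hsgn k col
          have h2 : 0 ≤ g col * ww col := by
            rw [hww]
            simp only
            rw [mul_comm, Finset.sum_mul]
            exact Finset.sum_nonneg fun k _ => hsgn k col
          exact sign_trans _ _ _ h1 h2 hg0
      · funext col
        simp only [Pi.add_apply, hvv, hww]
        rw [Finset.sum_add_sum_compl S (fun k => h k col)]
        exact (hsum col).symm
    -- pigeonhole on the prefix sums
    have hboxcard : (Fintype.piFinset (fun _ : Fin r => Finset.Icc (-R) R)).card =
        ((2 * R + 1).toNat) ^ r := by
      rw [Fintype.card_piFinset]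
      have e1 : ∀ _i : Fin r, (Finset.Icc (-R) R).card = (2 * R + 1).toNat := by
        intro _i
        rw [Int.card_Icc]
        congr 1
        ring
      rw [Finset.prod_congr rfl (fun i _ => e1 i), Finset.prod_const, Finset.card_univ,
        Fintype.card_fin]
    have hcard_lt : (Fintype.piFinset (fun _ : Fin r => Finset.Icc (-R) R)).card <
        (Finset.range N).card := by
      rw [hboxcard, Finset.card_range]
      have h1 : (((2 * R + 1).toNat : ℤ)) ^ r < (N : ℤ) := by
        rw [Int.toNat_of_nonneg (by linarith)]
        exact hcon
      exact_mod_cast h1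
    obtain ⟨m₁, hm₁, m₂, hm₂, hmne, hpeq⟩ :=
      Finset.exists_ne_map_eq_of_card_lt_of_maps_to hcard_lt
        (f := p)
        (fun m _ => by
          rw [Finset.mem_coe, Fintype.mem_piFinset]
          intro ρ
          rw [Finset.mem_Icc, ← abs_le]
          exact hlbd m ρ)
    rcases hmne.lt_or_gt with hlt | hlt
    · exact key m₁ m₂ hlt (Finset.mem_range.mp hm₂) hpeq
    · exact key m₂ m₁ hlt (Finset.mem_range.mp hm₁) hpeq.symm
  calc ∑ col, |g col| = ∑ col, ∑ k, |h k col| :=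
        Finset.sum_congr rfl fun col _ => (habs col).symm
    _ = ∑ k, ∑ col, |h k col| := Finset.sum_comm
    _ ≤ ∑ _k : Fin N, G := Finset.sum_le_sum fun k _ => hl1 k
    _ = (N : ℤ) * G := by
        rw [Finset.sum_const, Finset.card_univ, Fintype.card_fin, nsmul_eq_mul]
    _ ≤ (2 * R + 1) ^ r * G := mul_le_mul_of_nonneg_right hNle (by linarith)
    _ = G * (2 * (r : ℤ) * G * Δ + 1) ^ r := by rw [hR, hM]; ring
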